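/- With ψ_λ as above and N' := N/(N−1), the inequality |Dψ_λ(ξ)|^{N'} ≤ (1/α₀) Dψ_λ(ξ):ξ holds for every symmetric 2×2 matrix ξ. -/

import Mathlib

open Matrix MeasureTheory Filter

noncomputable def frobInner (ξ ζ : Matrix (Fin 2) (Fin 2) ℝ) : ℝ :=
  ∑ i : Fin 2, ∑ j : Fin 2, ξ i j * ζ i j

noncomputable def frobNorm (ξ : Matrix (Fin 2) (Fin 2) ℝ) : ℝ :=
  Real.sqrt (frobInner ξ ξ)

noncomputable def rInner (ξ ζ : Matrix (Fin 2) (Fin 2) ℝ) : ℝ :=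
  frobInner ξ ζ - (1 / 3) * Matrix.trace ξ * Matrix.trace ζ

noncomputable def rNorm (ξ : Matrix (Fin 2) (Fin 2) ℝ) : ℝ :=
  Real.sqrt (frobInner ξ ξ - (1 / 3) * Matrix.trace ξ ^ 2)

noncomputable def starNorm (ξ : Matrix (Fin 2) (Fin 2) ℝ) : ℝ :=
  Real.sqrt (frobInner ξ ξ + Matrix.trace ξ ^ 2)

noncomputable def Dpsi (N : ℕ) (a l : ℝ) (ξ : Matrix (Fin 2) (Fin 2) ℝ) :
    Matrix (Fin 2) (Fin 2) ℝ :=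
  ((1 / a ^ (N - 1)) * min (rNorm ξ ^ (N - 2)) (l ^ (N - 2))) •
    (ξ - ((1 / 3 : ℝ) * Matrix.trace ξ) • (1 : Matrix (Fin 2) (Fin 2) ℝ))

lemma aux_inner (N : ℕ) (a l : ℝ) (ξ : Matrix (Fin 2) (Fin 2) ℝ) :
    frobInner (Dpsi N a l ξ) ξ =
      ((1 / a ^ (N - 1)) * min (rNorm ξ ^ (N - 2)) (l ^ (N - 2))) *
        (frobInner ξ ξ - (1 / 3) * Matrix.trace ξ ^ 2) := by
  simp only [Dpsi, frobInner, Fin.sum_univ_two, Matrix.smul_apply, Matrix.sub_apply,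
    Matrix.one_apply, Matrix.trace_fin_two, smul_eq_mul]
  norm_num
  ring

lemma aux_self (N : ℕ) (a l : ℝ) (ξ : Matrix (Fin 2) (Fin 2) ℝ) :
    frobInner (Dpsi N a l ξ) (Dpsi N a l ξ) =
      ((1 / a ^ (N - 1)) * min (rNorm ξ ^ (N - 2)) (l ^ (N - 2))) ^ 2 *
        (frobInner ξ ξ - (4 / 9) * Matrix.trace ξ ^ 2) := by
  simp only [Dpsi, frobInner, Fin.sum_univ_two, Matrix.smul_apply, Matrix.sub_apply,
    Matrix.one_apply, Matrix.trace_fin_two, smul_eq_mul]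
  norm_num
  ring

theorem stmt11 (N : ℕ) (hN : 4 ≤ N) (a l : ℝ) (ha : 0 < a) (hl : 0 < l)
    (ξ : Matrix (Fin 2) (Fin 2) ℝ) (hξ : ξ.IsSymm) :
    frobNorm (Dpsi N a l ξ) ^ ((N : ℝ) / ((N : ℝ) - 1)) ≤
      (1 / a) * frobInner (Dpsi N a l ξ) ξ := by
  set r := rNorm ξ with hrdef
  set c := (1 / a ^ (N - 1)) * min (rNorm ξ ^ (N - 2)) (l ^ (N - 2)) with hcdef
  have hr0 : 0 ≤ r := Real.sqrt_nonneg _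
  have hc0 : 0 ≤ c := by
    apply mul_nonneg
    · positivity
    · exact le_min (pow_nonneg hr0 _) (pow_nonneg hl.le _)
  have hs : 0 ≤ frobInner ξ ξ - (1 / 3) * Matrix.trace ξ ^ 2 := by
    simp only [frobInner, Fin.sum_univ_two, Matrix.trace_fin_two]
    nlinarith [sq_nonneg (ξ 0 1), sq_nonneg (ξ 1 0), sq_nonneg (ξ 0 0 - ξ 1 1),
      sq_nonneg (ξ 0 0), sq_nonneg (ξ 1 1)]
  have hr2 : r ^ 2 = frobInner ξ ξ - (1 / 3) * Matrix.trace ξ ^ 2 :=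
    Real.sq_sqrt hs
  have hA : frobInner (Dpsi N a l ξ) ξ = c * r ^ 2 := by
    rw [aux_inner, hr2]
  have h1 : frobNorm (Dpsi N a l ξ) ≤ c * r := by
    rw [frobNorm, aux_self]
    calc Real.sqrt (c ^ 2 * (frobInner ξ ξ - (4 / 9) * Matrix.trace ξ ^ 2))
        ≤ Real.sqrt (c ^ 2 * (frobInner ξ ξ - (1 / 3) * Matrix.trace ξ ^ 2)) := by
          apply Real.sqrt_le_sqrt
          have := sq_nonneg (Matrix.trace ξ)
          nlinarith [sq_nonneg c]
      _ = c * r := by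
          rw [← hr2]
          rw [show c ^ 2 * r ^ 2 = (c * r) ^ 2 by ring]
          exact Real.sqrt_sq (mul_nonneg hc0 hr0)
  have hNexp : (0:ℝ) < (N : ℝ) / ((N : ℝ) - 1) := by
    have : (4:ℝ) ≤ N := by exact_mod_cast hN
    apply div_pos <;> linarith
  have hfnn : 0 ≤ frobNorm (Dpsi N a l ξ) := Real.sqrt_nonneg _
  have hmain : (c * r) ^ ((N : ℝ) / ((N : ℝ) - 1)) ≤ (1 / a) * (c * r ^ 2) := by
    rcases eq_or_lt_of_le (mul_nonneg hc0 hr0) with hX | hX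
    · rw [← hX, Real.zero_rpow (ne_of_gt hNexp)]
      have : c * r ^ 2 = (c * r) * r := by ring
      rw [this, ← hX]
      simp
    · -- X > 0
      have hN1 : (1:ℝ) ≤ (N:ℝ) - 1 := by
        have : (4:ℝ) ≤ N := by exact_mod_cast hN
        linarith
      have hsplit : (N : ℝ) / ((N : ℝ) - 1) = 1 + 1 / ((N : ℝ) - 1) := by
        field_simp
        ring
      have hXpow : (c * r) ^ ((N : ℝ) / ((N : ℝ) - 1)) =
          (c * r) * (c * r) ^ ((1:ℝ) / ((N : ℝ) - 1)) := by
        rw [hsplit, Real.rpow_add hX, Real.rpow_one]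
      rw [hXpow]
      have hcr : c * r ≤ (r / a) ^ (N - 1) := by
        have hc' : c ≤ r ^ (N - 2) / a ^ (N - 1) := by
          calc c = min (rNorm ξ ^ (N - 2)) (l ^ (N - 2)) * (a ^ (N - 1))⁻¹ := by
                rw [hcdef]; ring
            _ ≤ r ^ (N - 2) * (a ^ (N - 1))⁻¹ := by
                gcongr
                rw [hrdef]; exact min_le_left _ _
            _ = r ^ (N - 2) / a ^ (N - 1) := by rw [div_eq_mul_inv]
        have hstep : c * r ≤ r ^ (N - 2) / a ^ (N - 1) * r :=
          mul_le_mul_of_nonneg_right hc' hr0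
        refine hstep.trans (le_of_eq ?_)
        rw [div_pow]
        have hNN : N - 1 = (N - 2) + 1 := by omega
        rw [hNN, pow_succ]
        field_simp
        exact (pow_succ r (N-2)).symm
      have hroot : (c * r) ^ ((1:ℝ) / ((N : ℝ) - 1)) ≤ r / a := by
        have hra : 0 ≤ r / a := div_nonneg hr0 ha.le
        have hrhs : ((r / a) ^ (N - 1)) ^ ((1:ℝ) / ((N : ℝ) - 1)) = r / a := by
          rw [← Real.rpow_natCast (r/a) (N-1), ← Real.rpow_mul hra]
          have hcast : ((N - 1 : ℕ) : ℝ) = (N : ℝ) - 1 := by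
            have : 1 ≤ N := by omega
            push_cast [this]
            ring
          rw [hcast, mul_one_div, div_self (by linarith), Real.rpow_one]
        calc (c * r) ^ ((1:ℝ) / ((N : ℝ) - 1))
            ≤ ((r / a) ^ (N - 1)) ^ ((1:ℝ) / ((N : ℝ) - 1)) := by
              apply Real.rpow_le_rpow hX.le hcr
              positivity
          _ = r / a := hrhs
      calc (c * r) * (c * r) ^ ((1:ℝ) / ((N : ℝ) - 1))
          ≤ (c * r) * (r / a) := by
            apply mul_le_mul_of_nonneg_left hroot hX.le
        _ = (1 / a) * (c * r ^ 2) := by ring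
  calc frobNorm (Dpsi N a l ξ) ^ ((N : ℝ) / ((N : ℝ) - 1))
      ≤ (c * r) ^ ((N : ℝ) / ((N : ℝ) - 1)) :=
        Real.rpow_le_rpow hfnn h1 hNexp.le
    _ ≤ (1 / a) * (c * r ^ 2) := hmain
    _ = (1 / a) * frobInner (Dpsi N a l ξ) ξ := by rw [hA]
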